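/- Let X be a compact Hausdorff topological space, let X₀ be a dense subset of X, and let A be a uniformly bounded set of continuous real-valued functions on X. Suppose that every function g : X → ℝ lying in the closure of A in the product topology on ℝ^X is continuous. Then for every sequence (f_m) of elements of A and every sequence (x_n) of points of X₀, if for every n the limit c(n) = lim_m f_m(x_n) exists and lim_n c(n) exists, and for every m the limit d(m) = lim_n f_m(x_n) exists and lim_m d(m) exists, then lim_n c(n) = lim_m d(m). -/
import Mathlib


open Filter Topology

/-- The converse implication of Grothendieck's double limit theorem:
if every function in the pointwise closure of `A` is continuous,
then the double limit condition holds for `A` relative to the dense set `X₀`. -/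
theorem double_limit_of_continuous_closure {X : Type*} [TopologicalSpace X] [CompactSpace X]
    [T2Space X]
    (X₀ : Set X) (hX₀ : Dense X₀)
    (A : Set (X → ℝ)) (hcont : ∀ f ∈ A, Continuous f)
    (C : ℝ) (hbd : ∀ f ∈ A, ∀ x, |f x| ≤ C)
    (hcl : ∀ g ∈ closure A, Continuous g) :
    ∀ (f : ℕ → X → ℝ), (∀ m, f m ∈ A) →
      ∀ (x : ℕ → X), (∀ n, x n ∈ X₀) →
      ∀ (c d : ℕ → ℝ) (r s : ℝ),
        (∀ n, Tendsto (fun m => f m (x n)) atTop (𝓝 (c n))) →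
        Tendsto c atTop (𝓝 r) →
        (∀ m, Tendsto (fun n => f m (x n)) atTop (𝓝 (d m))) →
        Tendsto d atTop (𝓝 s) →
        r = s := by
  intro f hf x hx c d r s hc hr hd hs
  -- ultrafilter on the index `n`
  set U : Ultrafilter ℕ := Ultrafilter.of atTop with hU
  have hUle : (U : Filter ℕ) ≤ atTop := Ultrafilter.of_le atTop
  -- ultrafilter on the index `m`
  set V : Ultrafilter ℕ := Ultrafilter.of atTop with hV
  have hVle : (V : Filter ℕ) ≤ atTop := Ultrafilter.of_le atTop
  -- x converges along U to some x⋆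
  obtain ⟨x₀, -, hx₀⟩ := isCompact_univ.ultrafilter_le_nhds (U.map x) (by simp)
  have hxU : Tendsto x U (𝓝 x₀) := hx₀
  -- closure A is compact
  have hK : IsCompact (Set.pi Set.univ fun _ : X => Set.Icc (-C) C) :=
    isCompact_univ_pi fun _ => isCompact_Icc
  have hsub : closure A ⊆ Set.pi Set.univ fun _ : X => Set.Icc (-C) C := by
    apply closure_minimal _ (isClosed_set_pi fun _ _ => isClosed_Icc)
    intro g hg y _
    exact abs_le.mp (hbd g hg y)
  have hclK : IsCompact (closure A) := hK.of_isClosed_subset isClosed_closure hsub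
  -- f converges along V to some g in closure A
  have hfmem : (V : Filter ℕ).map f ≤ 𝓟 (closure A) := by
    rw [le_principal_iff]
    exact Filter.mem_map.mpr (Filter.univ_mem' fun m => subset_closure (hf m))
  obtain ⟨g, hgA, hgV⟩ := hclK.ultrafilter_le_nhds (V.map f) hfmem
  have hgV' : ∀ y, Tendsto (fun m => f m y) V (𝓝 (g y)) := by
    have := tendsto_pi_nhds.mp (hgV : Tendsto f V (𝓝 g))
    exact this
  have hgc : Continuous g := hcl g hgA
  -- c n = g (x n)
  have hcg : ∀ n, c n = g (x n) := fun n =>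
    tendsto_nhds_unique ((hc n).mono_left hVle) (hgV' (x n))
  -- r = g x₀
  have hr' : r = g x₀ := by
    refine tendsto_nhds_unique (hr.mono_left hUle) ?_
    have : Tendsto (fun n => g (x n)) U (𝓝 (g x₀)) := (hgc.tendsto x₀).comp hxU
    simpa [funext hcg] using this
  -- d m = f m x₀
  have hdf : ∀ m, d m = f m x₀ := fun m =>
    tendsto_nhds_unique ((hd m).mono_left hUle) (((hcont (f m) (hf m)).tendsto x₀).comp hxU)
  -- s = g x₀
  have hs' : s = g x₀ := by
    refine tendsto_nhds_unique (hs.mono_left hVle) ?_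
    simpa [funext hdf] using hgV' x₀
  rw [hr', hs']
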